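/- Let T ∈ (0,∞) be finite and let A, B : [0,T) → ℝ be differentiable with A(t) > 0 and B(t) > 0, satisfying A'(t) = -4(A(t)/B(t))² and B'(t) = -8 + 4·A(t)/B(t) on [0,T), and suppose A(t)/B(t) → 1 as t → T⁻. If A(0)/B(0) < 1/2, then there is a unique t₀ ∈ (0,T) with A(t₀)/B(t₀) = 1/2, and the function φ(t) := (A(t)/B(t))·(1 - A(t)/B(t)) is strictly increasing on [0,t₀], strictly decreasing on [t₀,T), attains its unique maximum at t₀, and φ(t) → 0 as t → T⁻. -/

import Mathlib

open Filter Set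

/-- Ricci flow ODE on SU(2) with `B = C`, case `A₀/B₀ < 1/2`: the function
`φ = (A/B)(1 - A/B)` increases up to the unique time `t₀` where `A/B = 1/2`,
then decreases, attaining its unique maximum at `t₀`, and `φ → 0` as `t → T⁻`. -/
theorem su2_L1_norm_small_initial_ratio (T : ℝ) (hT : 0 < T) (A B : ℝ → ℝ)
    (hA : ∀ t ∈ Set.Ico (0 : ℝ) T, 0 < A t)
    (hB : ∀ t ∈ Set.Ico (0 : ℝ) T, 0 < B t)
    (hA' : ∀ t ∈ Set.Ico (0 : ℝ) T, HasDerivAt A (-4 * (A t / B t) ^ 2) t)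
    (hB' : ∀ t ∈ Set.Ico (0 : ℝ) T, HasDerivAt B (-8 + 4 * (A t / B t)) t)
    (hlim : Tendsto (fun t => A t / B t) (nhdsWithin T (Set.Iio T)) (nhds 1))
    (h0 : A 0 / B 0 < 1 / 2) :
    ∃ t₀ ∈ Set.Ioo (0 : ℝ) T, A t₀ / B t₀ = 1 / 2 ∧
      (∀ t ∈ Set.Ioo (0 : ℝ) T, A t / B t = 1 / 2 → t = t₀) ∧
      StrictMonoOn (fun t => (A t / B t) * (1 - A t / B t)) (Set.Icc 0 t₀) ∧
      StrictAntiOn (fun t => (A t / B t) * (1 - A t / B t)) (Set.Ico t₀ T) ∧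
      (∀ t ∈ Set.Ico (0 : ℝ) T, t ≠ t₀ →
        (A t / B t) * (1 - A t / B t) < (A t₀ / B t₀) * (1 - A t₀ / B t₀)) ∧
      Tendsto (fun t => (A t / B t) * (1 - A t / B t))
        (nhdsWithin T (Set.Iio T)) (nhds 0) := by
  have h00 : (0:ℝ) ∈ Ico (0:ℝ) T := ⟨le_refl _, hT⟩
  -- continuity
  have hAc : ContinuousOn A (Ico (0:ℝ) T) :=
    fun t ht => (hA' t ht).continuousAt.continuousWithinAt
  have hBc : ContinuousOn B (Ico (0:ℝ) T) :=
    fun t ht => (hB' t ht).continuousAt.continuousWithinAt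
  have hBne : ∀ t ∈ Ico (0:ℝ) T, B t ≠ 0 := fun t ht => (hB t ht).ne'
  have hfc : ContinuousOn (fun t => A t / B t) (Ico (0:ℝ) T) := hAc.div hBc hBne
  -- derivative of the ratio
  have hf'd : ∀ t ∈ Ico (0:ℝ) T,
      HasDerivAt (fun t => A t / B t)
        (8 / B t * ((A t / B t) * (1 - A t / B t))) t := by
    intro t ht
    have h := (hA' t ht).div (hB' t ht) (hBne t ht)
    refine h.congr_deriv ?_
    have hb := hBne t ht
    field_simp
    ring
  -- A < B on [0, T)
  have hA0B0 : A 0 < B 0 := by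
    have h0' : A 0 < 1 / 2 * B 0 := (div_lt_iff₀ (hB 0 h00)).mp h0
    nlinarith [hB 0 h00]
  have hlt1 : ∀ t ∈ Ico (0:ℝ) T, A t < B t := by
    by_contra hcon
    push_neg at hcon
    obtain ⟨t₁, ht₁, hle⟩ := hcon
    have ht₁pos : 0 < t₁ := by
      rcases ht₁.1.lt_or_eq with h | h
      · exact h
      · exfalso; rw [← h] at hle; linarith
    have hsub : Icc (0:ℝ) t₁ ⊆ Ico (0:ℝ) T :=
      fun u hu => ⟨hu.1, lt_of_le_of_lt hu.2 ht₁.2⟩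
    have hDc : ContinuousOn (fun t => B t - A t) (Icc (0:ℝ) t₁) :=
      (hBc.sub hAc).mono hsub
    -- zero of B - A by IVT
    have hmem : (0:ℝ) ∈ Icc (B t₁ - A t₁) (B 0 - A 0) := ⟨by linarith, by linarith⟩
    obtain ⟨t₂, ht₂mem, ht₂⟩ := intermediate_value_Icc' ht₁pos.le hDc hmem
    -- bound the coefficient
    have hcc : ContinuousOn (fun u => 4 * (A u / B u + 2) / B u) (Icc (0:ℝ) t₁) := by
      apply ContinuousOn.div _ (hBc.mono hsub) (fun u hu => hBne u (hsub hu))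
      exact continuousOn_const.mul ((hfc.mono hsub).add continuousOn_const)
    obtain ⟨M, hM⟩ := isCompact_Icc.exists_bound_of_continuousOn hcc
    -- reverse-time Gronwall
    have ht₂sub : ∀ s ∈ Icc (0:ℝ) t₂, t₂ - s ∈ Icc (0:ℝ) t₁ :=
      fun s hs => ⟨by linarith [hs.2], by linarith [hs.1, ht₂mem.2]⟩
    set G : ℝ → ℝ := fun s => B (t₂ - s) - A (t₂ - s) with hG
    set G' : ℝ → ℝ := fun s =>
      ((-8 + 4 * (A (t₂ - s) / B (t₂ - s))) - (-4 * (A (t₂ - s) / B (t₂ - s)) ^ 2)) * (-1)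
      with hG'def
    have hGc : ContinuousOn G (Icc (0:ℝ) t₂) := by
      apply ContinuousOn.comp hDc (by fun_prop) ht₂sub
    have hG' : ∀ s ∈ Ico (0:ℝ) t₂, HasDerivAt G (G' s) s := by
      intro s hs
      have hu : t₂ - s ∈ Ico (0:ℝ) T := hsub (ht₂sub s ⟨hs.1, hs.2.le⟩)
      have hDd := (hB' _ hu).sub (hA' _ hu)
      have hid : HasDerivAt (fun s : ℝ => t₂ - s) (-1) s := (hasDerivAt_id s).const_sub t₂
      exact hDd.comp s hid
    have key : ∀ u ∈ Ico (0:ℝ) T,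
        ((-8 + 4 * (A u / B u)) - (-4 * (A u / B u) ^ 2))
          = -(4 * (A u / B u + 2) / B u) * (B u - A u) := by
      intro u hu
      have hb := hBne u hu
      field_simp
      ring
    have hbound : ∀ s ∈ Ico (0:ℝ) t₂, ‖G' s‖ ≤ M * ‖G s‖ + 0 := by
      intro s hs
      have hsIcc : s ∈ Icc (0:ℝ) t₂ := ⟨hs.1, hs.2.le⟩
      have hu : t₂ - s ∈ Ico (0:ℝ) T := hsub (ht₂sub s hsIcc)
      have hk := key (t₂ - s) hu
      have : G' s = -(4 * (A (t₂-s) / B (t₂-s) + 2) / B (t₂-s)) * (B (t₂-s) - A (t₂-s)) * (-1) := by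
        simp only [hG'def]
        rw [hk]
      rw [this, add_zero]
      have := hM (t₂ - s) (ht₂sub s hsIcc)
      simp only [norm_mul, norm_neg, norm_one, mul_one, Real.norm_eq_abs] at *
      calc |4 * (A (t₂-s) / B (t₂-s) + 2) / B (t₂-s)| * |B (t₂-s) - A (t₂-s)|
          ≤ M * |B (t₂-s) - A (t₂-s)| := by
            apply mul_le_mul_of_nonneg_right this (abs_nonneg _)
        _ = M * |G s| := rfl
    have hG0 : ‖G 0‖ ≤ (0:ℝ) := by
      simp only [hG, sub_zero]
      simp only [show B t₂ - A t₂ = 0 from ht₂]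
      simp
    have hmain := norm_le_gronwallBound_of_norm_deriv_right_le (δ := 0) (ε := 0) hGc
      (fun s hs => (hG' s hs).hasDerivWithinAt) hG0 hbound
    have hfin := hmain t₂ ⟨ht₂mem.1, le_refl _⟩
    rw [gronwallBound_ε0] at hfin
    simp only [hG, sub_self, zero_mul, Real.norm_eq_abs] at hfin
    have : B 0 - A 0 ≤ 0 := by
      have := le_trans (le_abs_self _) hfin
      linarith
    linarith
  -- ratio is strictly increasing
  have hfpos : ∀ t ∈ Ico (0:ℝ) T, 0 < A t / B t :=
    fun t ht => div_pos (hA t ht) (hB t ht)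
  have hflt1 : ∀ t ∈ Ico (0:ℝ) T, A t / B t < 1 :=
    fun t ht => (div_lt_one (hB t ht)).mpr (hlt1 t ht)
  have hfmono : StrictMonoOn (fun t => A t / B t) (Ico (0:ℝ) T) := by
    apply strictMonoOn_of_deriv_pos (convex_Ico 0 T) hfc
    intro x hx
    rw [interior_Ico] at hx
    have hx' : x ∈ Ico (0:ℝ) T := ⟨hx.1.le, hx.2⟩
    rw [(hf'd x hx').deriv]
    have h1 := hfpos x hx'
    have h2 := hflt1 x hx'
    have h3 := hB x hx'
    apply mul_pos (by positivity) (mul_pos h1 (by linarith))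
  -- find t₀ with ratio = 1/2
  have hev : ∀ᶠ t in nhdsWithin T (Iio T), 1/2 < A t / B t ∧ t ∈ Ioo (0:ℝ) T := by
    have h1 : ∀ᶠ t in nhdsWithin T (Iio T), 1/2 < A t / B t :=
      hlim.eventually (eventually_gt_nhds (by norm_num))
    have h2 : ∀ᶠ t in nhdsWithin T (Iio T), (0:ℝ) < t :=
      eventually_nhdsWithin_of_eventually_nhds (eventually_gt_nhds hT)
    have h3 : ∀ᶠ t in nhdsWithin T (Iio T), t < T := eventually_mem_nhdsWithin
    filter_upwards [h1, h2, h3] with t a b c using ⟨a, ⟨b, c⟩⟩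
  obtain ⟨t₁, hgt, ht₁⟩ := hev.exists
  have hsub₁ : Icc (0:ℝ) t₁ ⊆ Ico (0:ℝ) T :=
    fun u hu => ⟨hu.1, lt_of_le_of_lt hu.2 ht₁.2⟩
  obtain ⟨t₀, ht₀mem, hft₀⟩ :=
    intermediate_value_Ioo ht₁.1.le (hfc.mono hsub₁) (⟨h0, hgt⟩ : (1:ℝ)/2 ∈ Ioo (A 0 / B 0) (A t₁ / B t₁))
  have ht₀ : t₀ ∈ Ioo (0:ℝ) T := ⟨ht₀mem.1, lt_trans ht₀mem.2 ht₁.2⟩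
  have ht₀Ico : t₀ ∈ Ico (0:ℝ) T := ⟨ht₀.1.le, ht₀.2⟩
  refine ⟨t₀, ht₀, hft₀, ?_, ?_, ?_, ?_, ?_⟩
  · -- uniqueness
    intro t ht hft
    exact hfmono.injOn ⟨ht.1.le, ht.2⟩ ht₀Ico (hft.trans hft₀.symm)
  all_goals {
    -- φ derivative
    have hφ' : ∀ t ∈ Ico (0:ℝ) T,
        HasDerivAt (fun t => (A t / B t) * (1 - A t / B t))
          ((8 / B t * ((A t / B t) * (1 - A t / B t))) * (1 - 2 * (A t / B t))) t := by
      intro t ht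
      have h := (hf'd t ht).mul ((hf'd t ht).const_sub 1)
      refine h.congr_deriv ?_
      ring
    have hφc : ContinuousOn (fun t => (A t / B t) * (1 - A t / B t)) (Ico (0:ℝ) T) :=
      hfc.mul (continuousOn_const.sub hfc)
    have hmono : StrictMonoOn (fun t => (A t / B t) * (1 - A t / B t)) (Icc 0 t₀) := by
      apply strictMonoOn_of_deriv_pos (convex_Icc _ _)
        (hφc.mono (fun u hu => ⟨hu.1, lt_of_le_of_lt hu.2 ht₀.2⟩))
      intro x hx
      rw [interior_Icc] at hx
      have hx' : x ∈ Ico (0:ℝ) T := ⟨hx.1.le, lt_trans hx.2 ht₀.2⟩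
      rw [(hφ' x hx').deriv]
      have h1 := hfpos x hx'
      have h2 := hflt1 x hx'
      have h3 := hB x hx'
      have h4 : A x / B x < 1/2 := by
        have := hfmono hx' ht₀Ico hx.2
        linarith [hft₀ ▸ this]
      apply mul_pos (mul_pos (by positivity) (mul_pos h1 (by linarith))) (by linarith)
    have hanti : StrictAntiOn (fun t => (A t / B t) * (1 - A t / B t)) (Ico t₀ T) := by
      apply strictAntiOn_of_deriv_neg (convex_Ico _ _)
        (hφc.mono (fun u hu => ⟨le_trans ht₀.1.le hu.1, hu.2⟩))
      intro x hx
      rw [interior_Ico] at hx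
      have hx' : x ∈ Ico (0:ℝ) T := ⟨le_trans ht₀.1.le hx.1.le, hx.2⟩
      rw [(hφ' x hx').deriv]
      have h1 := hfpos x hx'
      have h2 := hflt1 x hx'
      have h3 := hB x hx'
      have h4 : 1/2 < A x / B x := by
        have := hfmono ht₀Ico hx' hx.1
        linarith [hft₀ ▸ this]
      apply mul_neg_of_pos_of_neg (mul_pos (by positivity) (mul_pos h1 (by linarith)))
        (by linarith)
    first
    | exact hmono
    | exact hanti
    | { intro t ht hne
        rcases lt_or_gt_of_ne hne with h | h
        · exact hmono ⟨ht.1, h.le⟩ ⟨ht₀.1.le, le_refl _⟩ h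
        · exact hanti ⟨le_refl _, ht₀.2⟩ ⟨h.le, ht.2⟩ h }
    | { have h := hlim.mul ((tendsto_const_nhds : Tendsto (fun _ : ℝ => (1:ℝ)) (nhdsWithin T (Iio T)) (nhds 1)).sub hlim)
        norm_num at h
        convert h using 2 } }
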